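/- arXiv:2402.15334 — 6 statements merged into one kernel-verified Lean document; each statement's English description precedes it below -/
import Mathlib

section
/- Let N ≥ 2, let A ∈ ℂ^{N×N} be Hermitian positive definite with eigenvalues λ_0 ≥ λ_1 ≥ ⋯ ≥ λ_{N−1} > 0 (descending, with multiplicity), let b ∈ ℂ^N be a unit vector, and let ξ < 0. Then Θ = A − ξ b bᴴ is positive definite and its condition number κ(Θ) = θ_0/θ_{N−1} satisfies λ_0/λ_{N−2} ≤ κ(Θ) ≤ (λ_0 − ξ)/λ_{N−1}, where θ_0 and θ_{N−1} are respectively the largest and smallest eigenvalues of Θ. -/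
open Matrix
open scoped ComplexOrder

noncomputable section

/-- `l` lists the eigenvalues of the Hermitian matrix `A` (with Hermitian proof `hA`)
in descending order with multiplicity. -/
def IsDescEigListing {N : ℕ} {A : Matrix (Fin N) (Fin N) ℂ}
    (hA : A.IsHermitian) (l : Fin N → ℝ) : Prop :=
  Antitone l ∧ ∃ e : Equiv.Perm (Fin N), ∀ i, l i = hA.eigenvalues (e i)

/-- The condition number of a Hermitian matrix: the ratio of its largest singular value
to its smallest singular value, the singular values being the absolute values of the
eigenvalues. -/
noncomputable def hermCond {N : ℕ} {M : Matrix (Fin N) (Fin N) ℂ}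
    (hM : M.IsHermitian) : ℝ :=
  (⨆ i, |hM.eigenvalues i|) / (⨅ i, |hM.eigenvalues i|)

namespace SR1Aux
variable {n : ℕ}

lemma eigBasis_dot {M : Matrix (Fin n) (Fin n) ℂ} (hM : M.IsHermitian) (i j : Fin n) :
    star ⇑(hM.eigenvectorBasis i) ⬝ᵥ ⇑(hM.eigenvectorBasis j) = if i = j then 1 else 0 := by
  have h := (orthonormal_iff_ite.mp hM.eigenvectorBasis.orthonormal) i j
  rw [EuclideanSpace.inner_eq_star_dotProduct, dotProduct_comm] at h
  exact h

lemma vecMulVec_mulVec' (b c x : Fin n → ℂ) :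
    vecMulVec b c *ᵥ x = (c ⬝ᵥ x) • b := by
  funext i
  simp [vecMulVec, mulVec, dotProduct, Finset.mul_sum, mul_comm, mul_assoc, mul_left_comm]

lemma theta_form {A : Matrix (Fin n) (Fin n) ℂ} (ξ : ℝ) (b x : Fin n → ℂ) :
    star x ⬝ᵥ ((A - (ξ : ℂ) • vecMulVec b (star b)) *ᵥ x)
      = star x ⬝ᵥ (A *ᵥ x) - (ξ : ℂ) * (Complex.normSq (star b ⬝ᵥ x) : ℝ) := by
  rw [sub_mulVec, dotProduct_sub, smul_mulVec, dotProduct_smul, vecMulVec_mulVec',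
    dotProduct_smul]
  have hx : star x ⬝ᵥ b = starRingEnd ℂ (star b ⬝ᵥ x) := by
    rw [star_dotProduct]; rfl
  rw [hx]
  congr 1
  simp [smul_eq_mul, Complex.mul_conj]

lemma unit_dot_eq_one (U : Matrix (Fin n) (Fin n) ℂ) (hU : U ∈ Matrix.unitaryGroup (Fin n) ℂ)
    (x : Fin n → ℂ) : star (star U *ᵥ x) ⬝ᵥ (star U *ᵥ x) = star x ⬝ᵥ x := by
  rw [star_mulVec, ← Matrix.star_eq_conjTranspose, star_star, dotProduct_mulVec, vecMul_vecMul]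
  have : U * star U = 1 := (Matrix.mem_unitaryGroup_iff).mp hU
  rw [this, vecMul_one]

lemma rayleigh_repr {M : Matrix (Fin n) (Fin n) ℂ} (hM : M.IsHermitian) (x : Fin n → ℂ) :
    star x ⬝ᵥ (M *ᵥ x) =
      ((∑ i, hM.eigenvalues i *
        Complex.normSq ((star (hM.eigenvectorUnitary : Matrix (Fin n) (Fin n) ℂ) *ᵥ x) i) : ℝ) : ℂ) := by
  set U : Matrix (Fin n) (Fin n) ℂ := (hM.eigenvectorUnitary : Matrix (Fin n) (Fin n) ℂ) with hU
  set y := star U *ᵥ x with hy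
  have hsy : star y = star x ᵥ* U := by
    rw [hy, star_mulVec, ← Matrix.star_eq_conjTranspose, star_star]
  have key : star x ⬝ᵥ (M *ᵥ x) = star y ⬝ᵥ (diagonal (RCLike.ofReal ∘ hM.eigenvalues) *ᵥ y) := by
    conv_lhs => rw [hM.spectral_theorem, Unitary.conjStarAlgAut_apply]
    rw [← hU, ← mulVec_mulVec, ← mulVec_mulVec, dotProduct_mulVec, hsy]
  rw [key, dotProduct]
  push_cast
  apply Finset.sum_congr rfl
  intro i _
  rw [mulVec_diagonal]
  simp only [Pi.star_apply, Function.comp_apply, RCLike.ofReal_alg, RCLike.star_def,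
    Complex.real_smul, Complex.normSq_eq_conj_mul_self]
  ring

lemma dot_self_repr {M : Matrix (Fin n) (Fin n) ℂ} (hM : M.IsHermitian) (x : Fin n → ℂ) :
    (star x ⬝ᵥ x).re =
      ∑ i, Complex.normSq ((star (hM.eigenvectorUnitary : Matrix (Fin n) (Fin n) ℂ) *ᵥ x) i) := by
  rw [← unit_dot_eq_one _ hM.eigenvectorUnitary.2 x, dotProduct, Complex.re_sum]
  exact Finset.sum_congr rfl fun i _ => by
    simp [Complex.normSq_apply, Complex.mul_re]

lemma rayleigh_le_of {M : Matrix (Fin n) (Fin n) ℂ} (hM : M.IsHermitian) {C : ℝ}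
    (hC : ∀ i, hM.eigenvalues i ≤ C) (x : Fin n → ℂ) :
    (star x ⬝ᵥ (M *ᵥ x)).re ≤ C * (star x ⬝ᵥ x).re := by
  rw [rayleigh_repr hM x, Complex.ofReal_re, dot_self_repr hM x, Finset.mul_sum]
  exact Finset.sum_le_sum fun i _ => mul_le_mul_of_nonneg_right (hC i) (Complex.normSq_nonneg _)

lemma le_rayleigh_of {M : Matrix (Fin n) (Fin n) ℂ} (hM : M.IsHermitian) {c : ℝ}
    (hc : ∀ i, c ≤ hM.eigenvalues i) (x : Fin n → ℂ) :
    c * (star x ⬝ᵥ x).re ≤ (star x ⬝ᵥ (M *ᵥ x)).re := by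
  rw [rayleigh_repr hM x, Complex.ofReal_re, dot_self_repr hM x, Finset.mul_sum]
  exact Finset.sum_le_sum fun i _ => mul_le_mul_of_nonneg_right (hc i) (Complex.normSq_nonneg _)

lemma eig_unit {M : Matrix (Fin n) (Fin n) ℂ} (hM : M.IsHermitian) (j : Fin n) :
    star ⇑(hM.eigenvectorBasis j) ⬝ᵥ ⇑(hM.eigenvectorBasis j) = 1 := by
  simpa using eigBasis_dot hM j j

lemma eig_quad {M : Matrix (Fin n) (Fin n) ℂ} (hM : M.IsHermitian) (j : Fin n) :
    (star ⇑(hM.eigenvectorBasis j) ⬝ᵥ (M *ᵥ ⇑(hM.eigenvectorBasis j))).re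
      = hM.eigenvalues j := by
  rw [hM.mulVec_eigenvectorBasis, dotProduct_smul, eig_unit hM j]
  simp [Complex.real_smul]

lemma cs_le {b x : Fin n → ℂ} (hb : star b ⬝ᵥ b = 1) (hx : star x ⬝ᵥ x = 1) :
    Complex.normSq (star b ⬝ᵥ x) ≤ 1 := by
  set q := star b ⬝ᵥ x with hq
  have h0 : 0 ≤ star (x - q • b) ⬝ᵥ (x - q • b) := dotProduct_star_self_nonneg _
  have hxb : star x ⬝ᵥ b = starRingEnd ℂ q := by rw [hq, star_dotProduct]; rfl
  have hexp : star (x - q • b) ⬝ᵥ (x - q • b) = ((1 - Complex.normSq q : ℝ) : ℂ) := by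
    rw [star_sub, star_smul, sub_dotProduct, dotProduct_sub, dotProduct_sub,
      smul_dotProduct, smul_dotProduct, dotProduct_smul, dotProduct_smul, hx, hb, hxb]
    simp only [smul_eq_mul, RCLike.star_def, mul_one]
    push_cast [Complex.normSq_eq_conj_mul_self]
    ring
  rw [hexp] at h0
  have := Complex.zero_le_real.mp h0
  linarith

lemma combo_dot {v w : Fin n → ℂ} (hvv : star v ⬝ᵥ v = 1) (hww : star w ⬝ᵥ w = 1)
    (hvw : star v ⬝ᵥ w = 0) (hwv : star w ⬝ᵥ v = 0) (a c p r : ℂ) :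
    star (a • v + c • w) ⬝ᵥ (p • v + r • w)
      = starRingEnd ℂ a * p + starRingEnd ℂ c * r := by
  rw [star_add, star_smul, star_smul, add_dotProduct, dotProduct_add, dotProduct_add,
    smul_dotProduct, smul_dotProduct, smul_dotProduct, smul_dotProduct,
    dotProduct_smul, dotProduct_smul, dotProduct_smul, dotProduct_smul,
    hvv, hww, hvw, hwv]
  simp only [smul_eq_mul, RCLike.star_def, mul_one, mul_zero, smul_zero]
  ring

end SR1Aux

namespace SR1Aux

lemma desc_max {M : Matrix (Fin n) (Fin n) ℂ} {hM : M.IsHermitian} {l : Fin n → ℝ}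
    (hl : IsDescEigListing hM l) (h0 : 0 < n) (i : Fin n) :
    hM.eigenvalues i ≤ l ⟨0, h0⟩ := by
  obtain ⟨ha, e, he⟩ := hl
  have h1 : hM.eigenvalues i = l (e.symm i) := by rw [he (e.symm i), e.apply_symm_apply]
  rw [h1]
  exact ha (by simp [Fin.le_def])

lemma desc_min {M : Matrix (Fin n) (Fin n) ℂ} {hM : M.IsHermitian} {l : Fin n → ℝ}
    (hl : IsDescEigListing hM l) (h0 : 0 < n) (i : Fin n) :
    l ⟨n - 1, by omega⟩ ≤ hM.eigenvalues i := by
  obtain ⟨ha, e, he⟩ := hl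
  have h1 : hM.eigenvalues i = l (e.symm i) := by rw [he (e.symm i), e.apply_symm_apply]
  rw [h1]
  refine ha ?_
  have := (e.symm i).isLt
  simp only [Fin.le_def]
  omega

end SR1Aux

/-- For `ξ < 0`, `Θ = A - ξ b bᴴ` is positive definite and its condition number
`κ(Θ) = θ₀ / θ_{N-1}` satisfies `λ₀/λ_{N-2} ≤ κ(Θ) ≤ (λ₀ - ξ)/λ_{N-1}`. -/
theorem sr1r_cond_bounds_neg_xi {N : ℕ} (hN : 2 ≤ N)
    (A : Matrix (Fin N) (Fin N) ℂ) (hA : A.PosDef)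
    (lam : Fin N → ℝ) (hlam : IsDescEigListing hA.isHermitian lam)
    (hlampos : ∀ i, 0 < lam i)
    (b : Fin N → ℂ) (hb : star b ⬝ᵥ b = 1)
    (ξ : ℝ) (hξ : ξ < 0)
    (Θ : Matrix (Fin N) (Fin N) ℂ)
    (hΘdef : Θ = A - (ξ : ℂ) • vecMulVec b (star b))
    (hΘ : Θ.IsHermitian)
    (θ : Fin N → ℝ) (hθ : IsDescEigListing hΘ θ) :
    Θ.PosDef ∧
    hermCond hΘ = θ ⟨0, by omega⟩ / θ ⟨N - 1, by omega⟩ ∧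
    lam ⟨0, by omega⟩ / lam ⟨N - 2, by omega⟩ ≤ θ ⟨0, by omega⟩ / θ ⟨N - 1, by omega⟩ ∧
    θ ⟨0, by omega⟩ / θ ⟨N - 1, by omega⟩ ≤ (lam ⟨0, by omega⟩ - ξ) / lam ⟨N - 1, by omega⟩ := by
  have hN0 : 0 < N := by omega
  haveI : Nonempty (Fin N) := ⟨⟨0, hN0⟩⟩
  obtain ⟨hlamanti, eA, heA⟩ := id hlam
  obtain ⟨hθanti, eθ, heθ⟩ := id hθ
  have hform : ∀ x : Fin N → ℂ, star x ⬝ᵥ (Θ *ᵥ x)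
      = star x ⬝ᵥ (A *ᵥ x) - (ξ : ℂ) * (Complex.normSq (star b ⬝ᵥ x) : ℝ) := fun x => by
    rw [hΘdef]; exact SR1Aux.theta_form ξ b x
  have hformre : ∀ x : Fin N → ℂ, (star x ⬝ᵥ (Θ *ᵥ x)).re
      = (star x ⬝ᵥ (A *ᵥ x)).re - ξ * Complex.normSq (star b ⬝ᵥ x) := fun x => by
    rw [hform x]
    simp [Complex.sub_re, Complex.mul_re]
  -- positive definiteness
  have hΘpd : Θ.PosDef := by
    refine Matrix.PosDef.of_dotProduct_mulVec_pos hΘ (fun x hx => ?_)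
    have hA2 := hA.dotProduct_mulVec_pos hx
    rw [Complex.lt_def] at hA2 ⊢
    rw [hform x]
    have hnsq := Complex.normSq_nonneg (star b ⬝ᵥ x)
    constructor
    · simp only [Complex.zero_re, Complex.sub_re, Complex.mul_re, Complex.ofReal_re,
        Complex.ofReal_im, Complex.zero_im, mul_zero, sub_zero] at hA2 ⊢
      nlinarith [hA2.1]
    · simp only [Complex.zero_im, Complex.sub_im, Complex.mul_im, Complex.ofReal_re,
        Complex.ofReal_im, mul_zero, zero_mul, add_zero] at hA2 ⊢
      linarith [hA2.2]
  have eigθpos : ∀ i, 0 < hΘ.eigenvalues i := fun i => hΘpd.eigenvalues_pos i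
  have hθpos : ∀ i, 0 < θ i := fun i => by rw [heθ i]; exact eigθpos _
  -- sup and inf of |eigenvalues|
  have hsup : (⨆ i, |hΘ.eigenvalues i|) = θ ⟨0, by omega⟩ := by
    apply le_antisymm
    · refine ciSup_le fun i => ?_
      rw [abs_of_pos (eigθpos i)]
      exact SR1Aux.desc_max ⟨hθanti, eθ, heθ⟩ hN0 i
    · have h1 : θ (⟨0, by omega⟩ : Fin N) = |hΘ.eigenvalues (eθ ⟨0, by omega⟩)| := by
        rw [heθ, abs_of_pos (eigθpos _)]
      rw [h1]
      exact le_ciSup (f := fun i => |hΘ.eigenvalues i|)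
        (Set.Finite.bddAbove (Set.finite_range _)) (eθ ⟨0, by omega⟩)
  have hinf : (⨅ i, |hΘ.eigenvalues i|) = θ ⟨N - 1, by omega⟩ := by
    apply le_antisymm
    · have h1 : θ (⟨N - 1, by omega⟩ : Fin N) = |hΘ.eigenvalues (eθ ⟨N - 1, by omega⟩)| := by
        rw [heθ, abs_of_pos (eigθpos _)]
      rw [h1]
      exact ciInf_le (f := fun i => |hΘ.eigenvalues i|)
        (Set.Finite.bddBelow (Set.finite_range _)) (eθ ⟨N - 1, by omega⟩)
    · refine le_ciInf fun i => ?_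
      rw [abs_of_pos (eigθpos i)]
      exact SR1Aux.desc_min ⟨hθanti, eθ, heθ⟩ hN0 i
  -- λ₀ ≤ θ₀
  have hE : lam ⟨0, by omega⟩ ≤ θ ⟨0, by omega⟩ := by
    set v := ⇑(hA.isHermitian.eigenvectorBasis (eA ⟨0, by omega⟩)) with hvd
    have hv1 : star v ⬝ᵥ v = 1 := SR1Aux.eig_unit _ _
    have hv1re : (star v ⬝ᵥ v).re = 1 := by rw [hv1]; simp
    have hAv : (star v ⬝ᵥ (A *ᵥ v)).re = lam ⟨0, by omega⟩ := by
      rw [hvd, SR1Aux.eig_quad hA.isHermitian, ← heA]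
    have h2 : (star v ⬝ᵥ (Θ *ᵥ v)).re ≤ θ ⟨0, by omega⟩ := by
      have := SR1Aux.rayleigh_le_of hΘ
        (fun i => SR1Aux.desc_max ⟨hθanti, eθ, heθ⟩ hN0 i) v
      rwa [hv1re, mul_one] at this
    have h3 := hformre v
    have hs : 0 ≤ (-ξ) * Complex.normSq (star b ⬝ᵥ v) :=
      mul_nonneg (by linarith) (Complex.normSq_nonneg _)
    linarith
  -- θ₀ ≤ λ₀ - ξ
  have hF : θ ⟨0, by omega⟩ ≤ lam ⟨0, by omega⟩ - ξ := by
    set w := ⇑(hΘ.eigenvectorBasis (eθ ⟨0, by omega⟩)) with hwd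
    have hw1 : star w ⬝ᵥ w = 1 := SR1Aux.eig_unit _ _
    have hw1re : (star w ⬝ᵥ w).re = 1 := by rw [hw1]; simp
    have hΘw : (star w ⬝ᵥ (Θ *ᵥ w)).re = θ ⟨0, by omega⟩ := by
      rw [hwd, SR1Aux.eig_quad hΘ, ← heθ]
    have hAw : (star w ⬝ᵥ (A *ᵥ w)).re ≤ lam ⟨0, by omega⟩ := by
      have := SR1Aux.rayleigh_le_of hA.isHermitian
        (fun i => SR1Aux.desc_max ⟨hlamanti, eA, heA⟩ hN0 i) w
      rwa [hw1re, mul_one] at this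
    have hcs : Complex.normSq (star b ⬝ᵥ w) ≤ 1 := SR1Aux.cs_le hb hw1
    have h3 := hformre w
    have hs : 0 ≤ (-ξ) * (1 - Complex.normSq (star b ⬝ᵥ w)) :=
      mul_nonneg (by linarith) (by linarith)
    nlinarith
  -- λ_{N-1} ≤ θ_{N-1}
  have hG : lam ⟨N - 1, by omega⟩ ≤ θ ⟨N - 1, by omega⟩ := by
    set w := ⇑(hΘ.eigenvectorBasis (eθ ⟨N - 1, by omega⟩)) with hwd
    have hw1 : star w ⬝ᵥ w = 1 := SR1Aux.eig_unit _ _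
    have hw1re : (star w ⬝ᵥ w).re = 1 := by rw [hw1]; simp
    have hΘw : (star w ⬝ᵥ (Θ *ᵥ w)).re = θ ⟨N - 1, by omega⟩ := by
      rw [hwd, SR1Aux.eig_quad hΘ, ← heθ]
    have hAw : lam ⟨N - 1, by omega⟩ ≤ (star w ⬝ᵥ (A *ᵥ w)).re := by
      have := SR1Aux.le_rayleigh_of hA.isHermitian
        (fun i => SR1Aux.desc_min ⟨hlamanti, eA, heA⟩ hN0 i) w
      rwa [hw1re, mul_one] at this
    have h3 := hformre w
    have hs : 0 ≤ (-ξ) * Complex.normSq (star b ⬝ᵥ w) :=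
      mul_nonneg (by linarith) (Complex.normSq_nonneg _)
    linarith
  -- θ_{N-1} ≤ λ_{N-2}
  have hH : θ ⟨N - 1, by omega⟩ ≤ lam ⟨N - 2, by omega⟩ := by
    set v1 := ⇑(hA.isHermitian.eigenvectorBasis (eA ⟨N - 2, by omega⟩)) with hv1d
    set v2 := ⇑(hA.isHermitian.eigenvectorBasis (eA ⟨N - 1, by omega⟩)) with hv2d
    have hne : eA (⟨N - 2, by omega⟩ : Fin N) ≠ eA ⟨N - 1, by omega⟩ := by
      intro h
      have h2 := eA.injective h
      rw [Fin.mk.injEq] at h2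
      omega
    have h11 : star v1 ⬝ᵥ v1 = 1 := SR1Aux.eig_unit _ _
    have h22 : star v2 ⬝ᵥ v2 = 1 := SR1Aux.eig_unit _ _
    have h12 : star v1 ⬝ᵥ v2 = 0 := by
      have := SR1Aux.eigBasis_dot hA.isHermitian (eA ⟨N - 2, by omega⟩) (eA ⟨N - 1, by omega⟩)
      simpa [hne] using this
    have h21 : star v2 ⬝ᵥ v1 = 0 := by
      have := SR1Aux.eigBasis_dot hA.isHermitian (eA ⟨N - 1, by omega⟩) (eA ⟨N - 2, by omega⟩)
      simpa [Ne.symm hne] using this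
    set p := star b ⬝ᵥ v1 with hpd
    set q := star b ⬝ᵥ v2 with hqd
    obtain ⟨α, β, hab, hs⟩ : ∃ α β : ℂ,
        α * p + β * q = 0 ∧ 0 < Complex.normSq α + Complex.normSq β := by
      by_cases hp0 : p = 0
      · exact ⟨1, 0, by simp [hp0], by simp⟩
      · refine ⟨q, -p, by ring, ?_⟩
        have h1 := Complex.normSq_pos.mpr hp0
        have h2 := Complex.normSq_nonneg q
        simp only [Complex.normSq_neg]
        linarith
    set x := α • v1 + β • v2 with hxd
    have hbx : star b ⬝ᵥ x = 0 := by
      rw [hxd, dotProduct_add, dotProduct_smul, dotProduct_smul, ← hpd, ← hqd]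
      simpa [smul_eq_mul] using hab
    have hxx : star x ⬝ᵥ x = ((Complex.normSq α + Complex.normSq β : ℝ) : ℂ) := by
      rw [hxd, SR1Aux.combo_dot h11 h22 h12 h21]
      push_cast [Complex.normSq_eq_conj_mul_self]
      ring
    have hxxre : (star x ⬝ᵥ x).re = Complex.normSq α + Complex.normSq β := by
      rw [hxx]; simp
    have hA1 : A *ᵥ v1 = (lam ⟨N - 2, by omega⟩ : ℝ) • v1 := by
      rw [hv1d, hA.isHermitian.mulVec_eigenvectorBasis, ← heA]
    have hA2 : A *ᵥ v2 = (lam ⟨N - 1, by omega⟩ : ℝ) • v2 := by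
      rw [hv2d, hA.isHermitian.mulVec_eigenvectorBasis, ← heA]
    have hAx : star x ⬝ᵥ (A *ᵥ x) = ((lam ⟨N - 2, by omega⟩ * Complex.normSq α
        + lam ⟨N - 1, by omega⟩ * Complex.normSq β : ℝ) : ℂ) := by
      have hAxv : A *ᵥ x = ((lam ⟨N - 2, by omega⟩ : ℂ) * α) • v1
          + ((lam ⟨N - 1, by omega⟩ : ℂ) * β) • v2 := by
        rw [hxd, mulVec_add, mulVec_smul, mulVec_smul, hA1, hA2]
        funext k
        simp only [Pi.add_apply, Pi.smul_apply, smul_eq_mul, Complex.real_smul]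
        ring
      rw [hAxv, hxd, SR1Aux.combo_dot h11 h22 h12 h21]
      push_cast [Complex.normSq_eq_conj_mul_self]
      ring
    have hθm : θ ⟨N - 1, by omega⟩ * (Complex.normSq α + Complex.normSq β)
        ≤ (star x ⬝ᵥ (Θ *ᵥ x)).re := by
      have := SR1Aux.le_rayleigh_of hΘ
        (fun i => SR1Aux.desc_min ⟨hθanti, eθ, heθ⟩ hN0 i) x
      rwa [hxxre] at this
    have hΘx : (star x ⬝ᵥ (Θ *ᵥ x)).re = lam ⟨N - 2, by omega⟩ * Complex.normSq α
        + lam ⟨N - 1, by omega⟩ * Complex.normSq β := by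
      rw [hformre x, hbx, hAx]
      simp
    have hmono : lam ⟨N - 1, by omega⟩ ≤ lam ⟨N - 2, by omega⟩ := by
      refine hlamanti ?_
      simp only [Fin.mk_le_mk]
      omega
    have hfin : θ ⟨N - 1, by omega⟩ * (Complex.normSq α + Complex.normSq β)
        ≤ lam ⟨N - 2, by omega⟩ * (Complex.normSq α + Complex.normSq β) := by
      nlinarith [Complex.normSq_nonneg β]
    exact le_of_mul_le_mul_right hfin hs
  refine ⟨hΘpd, ?_, ?_, ?_⟩
  · show (⨆ i, |hΘ.eigenvalues i|) / (⨅ i, |hΘ.eigenvalues i|) = _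
    rw [hsup, hinf]
  · exact div_le_div₀ (le_of_lt (lt_of_lt_of_le (hlampos _) hE)) hE (hθpos _) hH
  · exact div_le_div₀ (by linarith [hlampos (⟨0, by omega⟩ : Fin N)]) hF (hlampos _) hG
end
end

section
/- (Theorem 1.) Let N ≥ 4, let A ∈ ℂ^{N×N} be Hermitian positive definite with eigenvalues λ_0 ≥ λ_1 ≥ ⋯ ≥ λ_{N−1} > 0 (descending, with multiplicity) satisfying λ_1 > λ_{N−2}, and let b ∈ ℂ^N be a unit vector. Then there exists ξ > 0 such that the eigenvalues θ_0 ≥ θ_1 ≥ ⋯ ≥ θ_{N−1} of Θ = A − ξ b bᴴ satisfy −θ_0 < θ_{N−1} < −θ_{N−2}. -/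
open Matrix
open scoped ComplexOrder

noncomputable section

section helpers
variable {N : ℕ}

lemma coord_eq {M : Matrix (Fin N) (Fin N) ℂ} (hM : M.IsHermitian) (x : Fin N → ℂ) (i : Fin N) :
    star (⇑(hM.eigenvectorBasis i)) ⬝ᵥ x
      = (star (hM.eigenvectorUnitary : Matrix (Fin N) (Fin N) ℂ) *ᵥ x) i := by
  simp [mulVec, dotProduct, Matrix.star_apply, Matrix.IsHermitian.eigenvectorUnitary_apply]

lemma eigvec_coord {M : Matrix (Fin N) (Fin N) ℂ} (hM : M.IsHermitian) (i j : Fin N) :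
    star (⇑(hM.eigenvectorBasis i)) ⬝ᵥ (⇑(hM.eigenvectorBasis j)) = (Pi.single j (1:ℂ) : Fin N → ℂ) i := by
  rw [coord_eq, hM.star_eigenvectorUnitary_mulVec]

lemma herm_sub_herm {A : Matrix (Fin N) (Fin N) ℂ} (hA : A.IsHermitian) (t : ℝ) (b : Fin N → ℂ) :
    (A - (t:ℂ) • vecMulVec b (star b)).IsHermitian := by
  have h1 : ((t:ℂ) • vecMulVec b (star b)).IsHermitian := by
    unfold Matrix.IsHermitian
    ext i j
    simp [conjTranspose_apply, vecMulVec_apply, mul_comm]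
  exact hA.sub h1

lemma vecMulVec_mulVec' (b x : Fin N → ℂ) :
    vecMulVec b (star b) *ᵥ x = (star b ⬝ᵥ x) • b := by
  ext i
  simp only [vecMulVec_apply, mulVec, dotProduct, Pi.smul_apply, smul_eq_mul,
    Finset.sum_mul]
  exact Finset.sum_congr rfl fun j _ => by ring

lemma ray_sub (M : Matrix (Fin N) (Fin N) ℂ) (t : ℝ) (b x : Fin N → ℂ) :
    star x ⬝ᵥ ((M - (t:ℂ) • vecMulVec b (star b)) *ᵥ x)
      = star x ⬝ᵥ (M *ᵥ x) - ((t * Complex.normSq (star b ⬝ᵥ x) : ℝ) : ℂ) := by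
  rw [sub_mulVec, dotProduct_sub, smul_mulVec, vecMulVec_mulVec']
  congr 1
  have hsx : star x ⬝ᵥ b = starRingEnd ℂ (star b ⬝ᵥ x) := by
    simp [dotProduct, map_sum, mul_comm]
  rw [dotProduct_smul, dotProduct_smul, hsx, smul_eq_mul, smul_eq_mul,
    Complex.mul_conj]
  push_cast
  ring

lemma cs_one {b x : Fin N → ℂ} (hb : star b ⬝ᵥ b = 1) (hx : star x ⬝ᵥ x = 1) :
    Complex.normSq (star b ⬝ᵥ x) ≤ 1 := by
  set b' : EuclideanSpace ℂ (Fin N) := (WithLp.equiv 2 _).symm b with hb'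
  set x' : EuclideanSpace ℂ (Fin N) := (WithLp.equiv 2 _).symm x with hx'
  have h1 : (inner ℂ b' x' : ℂ) = star b ⬝ᵥ x := by
    simp [hb', hx', PiLp.inner_apply, dotProduct, mul_comm]
  have hbn : ‖b'‖ = 1 := by
    have : (inner ℂ b' b' : ℂ) = 1 := by
      rw [← hb, dotProduct_comm]; rfl
    have h2 := @norm_eq_sqrt_re_inner ℂ _ _ _ _ b'
    rw [this] at h2
    simp at h2
    exact h2
  have hxn : ‖x'‖ = 1 := by
    have : (inner ℂ x' x' : ℂ) = 1 := by
      rw [← hx, dotProduct_comm]; rfl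
    have h2 := @norm_eq_sqrt_re_inner ℂ _ _ _ _ x'
    rw [this] at h2
    simp at h2
    exact h2
  have := norm_inner_le_norm (𝕜 := ℂ) b' x'
  rw [h1, hbn, hxn, mul_one] at this
  have h3 : Complex.normSq (star b ⬝ᵥ x) = ‖star b ⬝ᵥ x‖^2 := by
    rw [← Complex.sq_norm]
  rw [h3]
  nlinarith [norm_nonneg (star b ⬝ᵥ x)]

end helpers

lemma herm_master {N : ℕ} {M : Matrix (Fin N) (Fin N) ℂ} (hM : M.IsHermitian) (x : Fin N → ℂ) :
    star x ⬝ᵥ (M *ᵥ x)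
        = ((∑ i, hM.eigenvalues i * Complex.normSq (star (⇑(hM.eigenvectorBasis i)) ⬝ᵥ x) : ℝ) : ℂ)
    ∧ star x ⬝ᵥ x = ((∑ i, Complex.normSq (star (⇑(hM.eigenvectorBasis i)) ⬝ᵥ x) : ℝ) : ℂ) := by
  set U : Matrix (Fin N) (Fin N) ℂ := (hM.eigenvectorUnitary : Matrix (Fin N) (Fin N) ℂ) with hU
  set y : Fin N → ℂ := star U *ᵥ x with hy
  have hyj : ∀ j, y j = star (⇑(hM.eigenvectorBasis j)) ⬝ᵥ x := by
    intro j
    simp [hy, mulVec, dotProduct, hU, Matrix.star_apply, Matrix.IsHermitian.eigenvectorUnitary_apply]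
  have hsy : star y = star x ᵥ* U := by
    rw [hy, star_mulVec, star_eq_conjTranspose, conjTranspose_conjTranspose]
  have h1 : star x ⬝ᵥ (M *ᵥ x) = star y ⬝ᵥ (diagonal (RCLike.ofReal ∘ hM.eigenvalues) *ᵥ y) := by
    conv_lhs => rw [hM.spectral_theorem]
    rw [Unitary.conjStarAlgAut_apply, ← mulVec_mulVec, ← mulVec_mulVec, dotProduct_mulVec, hsy, hy]
  have h2 : star x ⬝ᵥ x = star y ⬝ᵥ y := by
    rw [hsy, hy, ← dotProduct_mulVec, mulVec_mulVec,
      mem_unitaryGroup_iff.mp hM.eigenvectorUnitary.2, one_mulVec]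
  have key : star y ⬝ᵥ (diagonal (RCLike.ofReal ∘ hM.eigenvalues) *ᵥ y)
      = ((∑ i, hM.eigenvalues i * Complex.normSq (y i) : ℝ) : ℂ) := by
    simp only [dotProduct, mulVec_diagonal, Pi.star_apply, Function.comp_apply,
      Complex.ofReal_sum]
    refine Finset.sum_congr rfl fun i _ => ?_
    show star (y i) * ((hM.eigenvalues i : ℂ) * y i)
        = ((hM.eigenvalues i * Complex.normSq (y i) : ℝ) : ℂ)
    rw [Complex.star_def]
    push_cast [Complex.normSq_eq_conj_mul_self]
    ring
  have key2 : star y ⬝ᵥ y = ((∑ i, Complex.normSq (y i) : ℝ) : ℂ) := by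
    simp only [dotProduct, Pi.star_apply, Complex.ofReal_sum]
    refine Finset.sum_congr rfl fun i _ => ?_
    show star (y i) * y i = ((Complex.normSq (y i) : ℝ) : ℂ)
    rw [Complex.star_def, ← Complex.normSq_eq_conj_mul_self]
  constructor
  · rw [h1, key]
    norm_cast
  · rw [h2, key2]
    norm_cast

lemma ray_lb {M : Matrix (Fin N) (Fin N) ℂ} (hM : M.IsHermitian) (x : Fin N → ℂ) (c : ℝ)
    (h : ∀ i, c ≤ hM.eigenvalues i ∨ star (⇑(hM.eigenvectorBasis i)) ⬝ᵥ x = 0) :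
    c * (star x ⬝ᵥ x).re ≤ (star x ⬝ᵥ (M *ᵥ x)).re := by
  obtain ⟨m1, m2⟩ := herm_master hM x
  rw [m1, m2, Complex.ofReal_re, Complex.ofReal_re, Finset.mul_sum]
  refine Finset.sum_le_sum fun i _ => ?_
  rcases h i with h' | h'
  · exact mul_le_mul_of_nonneg_right h' (Complex.normSq_nonneg _)
  · rw [h']
    simp

lemma ray_ub {M : Matrix (Fin N) (Fin N) ℂ} (hM : M.IsHermitian) (x : Fin N → ℂ) (C : ℝ)
    (h : ∀ i, hM.eigenvalues i ≤ C) :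
    (star x ⬝ᵥ (M *ᵥ x)).re ≤ C * (star x ⬝ᵥ x).re := by
  obtain ⟨m1, m2⟩ := herm_master hM x
  rw [m1, m2, Complex.ofReal_re, Complex.ofReal_re, Finset.mul_sum]
  exact Finset.sum_le_sum fun i _ =>
    mul_le_mul_of_nonneg_right (h i) (Complex.normSq_nonneg _)

lemma eigvec_ray {M : Matrix (Fin N) (Fin N) ℂ} (hM : M.IsHermitian) (j : Fin N) :
    star (⇑(hM.eigenvectorBasis j)) ⬝ᵥ (⇑(hM.eigenvectorBasis j)) = 1 ∧
    star (⇑(hM.eigenvectorBasis j)) ⬝ᵥ (M *ᵥ ⇑(hM.eigenvectorBasis j))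
      = ((hM.eigenvalues j : ℝ) : ℂ) := by
  obtain ⟨m1, m2⟩ := herm_master hM (⇑(hM.eigenvectorBasis j))
  simp only [eigvec_coord] at m1 m2
  constructor
  · rw [eigvec_coord, Pi.single_eq_same]
  · rw [m1]
    rw [Finset.sum_eq_single_of_mem j (Finset.mem_univ j)]
    · simp
    · intro i _ hij
      rw [Pi.single_eq_of_ne hij]
      simp

lemma pick_combo (c0 c1 : ℂ) :
    ∃ α β : ℂ, α * c0 + β * c1 = 0 ∧ 0 < Complex.normSq α + Complex.normSq β := by
  by_cases h : c0 = 0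
  · exact ⟨1, 0, by simp [h], by simp⟩
  · refine ⟨c1, -c0, by ring, ?_⟩
    have h1 := Complex.normSq_pos.2 h
    have h2 := Complex.normSq_nonneg c1
    rw [Complex.normSq_neg]
    linarith

lemma combo_ray {A : Matrix (Fin N) (Fin N) ℂ} (hA : A.IsHermitian) {i j : Fin N} (hij : i ≠ j)
    (α β : ℂ) :
    star (α • ⇑(hA.eigenvectorBasis i) + β • ⇑(hA.eigenvectorBasis j)) ⬝ᵥ
        (α • ⇑(hA.eigenvectorBasis i) + β • ⇑(hA.eigenvectorBasis j))
      = ((Complex.normSq α + Complex.normSq β : ℝ) : ℂ) ∧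
    star (α • ⇑(hA.eigenvectorBasis i) + β • ⇑(hA.eigenvectorBasis j)) ⬝ᵥ
        (A *ᵥ (α • ⇑(hA.eigenvectorBasis i) + β • ⇑(hA.eigenvectorBasis j)))
      = ((Complex.normSq α * hA.eigenvalues i + Complex.normSq β * hA.eigenvalues j : ℝ) : ℂ) := by
  set v := ⇑(hA.eigenvectorBasis i) with hv
  set w := ⇑(hA.eigenvectorBasis j) with hw
  have hvv : star v ⬝ᵥ v = 1 := (eigvec_ray hA i).1
  have hww : star w ⬝ᵥ w = 1 := (eigvec_ray hA j).1
  have hvw : star v ⬝ᵥ w = 0 := by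
    rw [hv, hw, eigvec_coord, Pi.single_eq_of_ne hij]
  have hwv : star w ⬝ᵥ v = 0 := by
    rw [hv, hw, eigvec_coord, Pi.single_eq_of_ne (Ne.symm hij)]
  have hmul : A *ᵥ (α • v + β • w)
      = (α * (hA.eigenvalues i : ℂ)) • v + (β * (hA.eigenvalues j : ℂ)) • w := by
    rw [mulVec_add, mulVec_smul, mulVec_smul, hv, hw, hA.mulVec_eigenvectorBasis,
      hA.mulVec_eigenvectorBasis]
    ext k
    simp [Pi.smul_apply, smul_eq_mul, Complex.real_smul]
    ring
  constructor
  · simp only [star_add, star_smul, add_dotProduct, smul_dotProduct, dotProduct_add,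
      dotProduct_smul, smul_eq_mul, hvv, hvw, hwv, hww]
    push_cast [Complex.normSq_eq_conj_mul_self, Complex.star_def]
    ring
  · rw [hmul]
    simp only [star_add, star_smul, add_dotProduct, smul_dotProduct, dotProduct_add,
      dotProduct_smul, smul_eq_mul, hvv, hvw, hwv, hww]
    push_cast [Complex.normSq_eq_conj_mul_self, Complex.star_def]
    ring


set_option maxHeartbeats 2000000 in
/-- Theorem 1: for a Hermitian positive definite `A` with `λ₁ > λ_{N-2}` and any unit
vector `b`, there exists `ξ > 0` such that the descending eigenvalues of
`Θ = A - ξ b bᴴ` satisfy `-θ₀ < θ_{N-1} < -θ_{N-2}`. -/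
theorem sr1r_exists_xi_smallest_eig_window {N : ℕ} (hN : 4 ≤ N)
    (A : Matrix (Fin N) (Fin N) ℂ) (hA : A.PosDef)
    (lam : Fin N → ℝ) (hlam : IsDescEigListing hA.isHermitian lam)
    (hlampos : ∀ i, 0 < lam i)
    (hgap : lam ⟨1, by omega⟩ > lam ⟨N - 2, by omega⟩)
    (b : Fin N → ℂ) (hb : star b ⬝ᵥ b = 1) :
    ∃ ξ : ℝ, 0 < ξ ∧
      ∀ (hΘ : (A - (ξ : ℂ) • vecMulVec b (star b)).IsHermitian)
        (θ : Fin N → ℝ), IsDescEigListing hΘ θ →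
          -θ ⟨0, by omega⟩ < θ ⟨N - 1, by omega⟩ ∧
          θ ⟨N - 1, by omega⟩ < -θ ⟨N - 2, by omega⟩ := by
  have hN0 : 0 < N := by omega
  obtain ⟨hanti, e, he⟩ := hlam
  have hAH := hA.isHermitian
  have hμ : ∀ i, hA.isHermitian.eigenvalues i = lam (e.symm i) := fun i => by
    rw [he (e.symm i), Equiv.apply_symm_apply]
  have hlamle : ∀ j : Fin N, lam ⟨N - 1, by omega⟩ ≤ lam j := fun j =>
    hanti (by simp only [Fin.le_def]; omega)
  have hlamge : ∀ j : Fin N, lam j ≤ lam ⟨0, by omega⟩ := fun j =>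
    hanti (by simp only [Fin.le_def]; omega)
  have hμmin : ∀ i, lam ⟨N - 1, by omega⟩ ≤ hA.isHermitian.eigenvalues i := fun i => by
    rw [hμ i]; exact hlamle _
  have hμmax : ∀ i, hA.isHermitian.eigenvalues i ≤ lam ⟨0, by omega⟩ := fun i => by
    rw [hμ i]; exact hlamge _
  have hg : ∀ t : ℝ, (A - (t:ℂ) • vecMulVec b (star b)).IsHermitian := fun t =>
    herm_sub_herm hA.isHermitian t b
  have hne : (Finset.univ : Finset (Fin N)).Nonempty := ⟨⟨0, hN0⟩, Finset.mem_univ _⟩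
  set f : ℝ → ℝ := fun t => Finset.univ.inf' hne ((hg t).eigenvalues) with hfdef
  have F1 : ∀ t i, f t ≤ (hg t).eigenvalues i := fun t i =>
    Finset.inf'_le _ (Finset.mem_univ i)
  have F2 : ∀ t, ∃ j, f t = (hg t).eigenvalues j := fun t => by
    obtain ⟨j, _, hj⟩ := Finset.exists_mem_eq_inf' hne ((hg t).eigenvalues)
    exact ⟨j, hj⟩
  have hbre : (star b ⬝ᵥ b).re = 1 := by rw [hb]; simp
  have hray : ∀ (t : ℝ) (x : Fin N → ℂ),
      (star x ⬝ᵥ ((A - (t:ℂ) • vecMulVec b (star b)) *ᵥ x)).re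
        = (star x ⬝ᵥ (A *ᵥ x)).re - t * Complex.normSq (star b ⬝ᵥ x) := by
    intro t x
    rw [ray_sub A t b x, Complex.sub_re, Complex.ofReal_re]
  have Fle : ∀ (t : ℝ) (x : Fin N → ℂ), star x ⬝ᵥ x = 1 →
      f t ≤ (star x ⬝ᵥ ((A - (t:ℂ) • vecMulVec b (star b)) *ᵥ x)).re := by
    intro t x hx
    have h := ray_lb (hg t) x (f t) (fun i => Or.inl (F1 t i))
    rw [hx] at h
    simpa using h
  have Fattain : ∀ t : ℝ, ∃ x : Fin N → ℂ, star x ⬝ᵥ x = 1 ∧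
      (star x ⬝ᵥ ((A - (t:ℂ) • vecMulVec b (star b)) *ᵥ x)).re = f t := by
    intro t
    obtain ⟨j, hj⟩ := F2 t
    obtain ⟨h1, h2⟩ := eigvec_ray (hg t) j
    exact ⟨_, h1, by rw [h2, Complex.ofReal_re, hj]⟩
  have Flb : ∀ t : ℝ, 0 ≤ t → lam ⟨N - 1, by omega⟩ - t ≤ f t := by
    intro t ht
    obtain ⟨x, hx1, hx2⟩ := Fattain t
    rw [hray t x] at hx2
    have h1 : lam ⟨N - 1, by omega⟩ ≤ (star x ⬝ᵥ (A *ᵥ x)).re := by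
      have h := ray_lb hA.isHermitian x _ (fun i => Or.inl (hμmin i))
      rw [hx1] at h
      simpa using h
    have hcs := cs_one hb hx1
    have hnn := Complex.normSq_nonneg (star b ⬝ᵥ x)
    nlinarith
  have Fub : ∀ t : ℝ, f t ≤ lam ⟨0, by omega⟩ - t := by
    intro t
    have h0 := Fle t b hb
    rw [hray t b] at h0
    have h1 : (star b ⬝ᵥ (A *ᵥ b)).re ≤ lam ⟨0, by omega⟩ := by
      have h := ray_ub hA.isHermitian b _ hμmax
      rw [hbre] at h
      simpa using h
    have h2 : Complex.normSq (star b ⬝ᵥ b) = 1 := by rw [hb]; simp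
    rw [h2] at h0
    linarith
  have Flip : ∀ s t : ℝ, f t ≤ f s + |t - s| := by
    intro s t
    obtain ⟨x, hx1, hx2⟩ := Fattain s
    have h0 := Fle t x hx1
    rw [hray t x] at h0
    rw [hray s x] at hx2
    have hcs := cs_one hb hx1
    have hnn := Complex.normSq_nonneg (star b ⬝ᵥ x)
    rcases le_total s t with h | h
    · rw [abs_of_nonneg (by linarith)]
      nlinarith
    · rw [abs_of_nonpos (by linarith)]
      nlinarith
  have hcont : Continuous f := by
    have hlip : LipschitzWith 1 f := by
      apply LipschitzWith.of_dist_le_mul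
      intro x y
      rw [Real.dist_eq, Real.dist_eq, NNReal.coe_one, one_mul]
      have h1 := Flip y x
      have h2 := Flip x y
      rw [abs_sub_comm y x] at h2
      rw [abs_le]
      constructor <;> linarith
    exact hlip.continuous
  set m : ℝ := -(lam ⟨1, by omega⟩ + lam ⟨N - 2, by omega⟩) / 2 with hmdef
  set T : ℝ := lam ⟨0, by omega⟩ + lam ⟨1, by omega⟩ with hTdef
  have hT0 : (0:ℝ) ≤ T := by
    have := hlampos ⟨0, by omega⟩
    have := hlampos ⟨1, by omega⟩
    simp only [hTdef]; linarith
  have hfT : f T ≤ -lam ⟨1, by omega⟩ := by have := Fub T; simp only [hTdef] at this ⊢; linarith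
  have hf0 : 0 < f 0 := by
    have h1 := Flb 0 le_rfl
    have h2 := hlampos ⟨N - 1, by omega⟩
    linarith
  have hm1 : -lam ⟨1, by omega⟩ < m := by simp only [hmdef]; linarith [hgap]
  have hm2 : m < -lam ⟨N - 2, by omega⟩ := by simp only [hmdef]; linarith [hgap]
  have hm0 : m < 0 := by
    have := hlampos ⟨1, by omega⟩
    have := hlampos ⟨N - 2, by omega⟩
    simp only [hmdef]; linarith
  have hmem : m ∈ Set.Icc (f T) (f 0) := ⟨by linarith, by linarith⟩
  obtain ⟨ξ, hξmem, hfξ⟩ := intermediate_value_Icc' hT0 hcont.continuousOn hmem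
  have hξpos : 0 < ξ := by
    rcases eq_or_lt_of_le hξmem.1 with h | h
    · exfalso; rw [← h] at hfξ; linarith
    · exact h
  refine ⟨ξ, hξpos, ?_⟩
  intro hΘ θ hθ
  obtain ⟨hanti', e', he'⟩ := hθ
  have heig : (hg ξ).eigenvalues = hΘ.eigenvalues := rfl
  have hebasis : ⇑((hg ξ).eigenvectorBasis) = ⇑(hΘ.eigenvectorBasis) := rfl
  -- θ at N-1 equals f ξ = m
  have hθmin : θ ⟨N - 1, by omega⟩ = m := by
    rw [← hfξ]
    apply le_antisymm
    · obtain ⟨j, hj⟩ := F2 ξ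
      have h1 : θ (e'.symm j) = (hg ξ).eigenvalues j := by
        rw [he' (e'.symm j), ← heig, Equiv.apply_symm_apply]
      calc θ ⟨N - 1, by omega⟩ ≤ θ (e'.symm j) :=
            hanti' (by simp only [Fin.le_def]; omega)
        _ = f ξ := by rw [h1, hj]
    · have h1 : θ ⟨N - 1, by omega⟩ = (hg ξ).eigenvalues (e' ⟨N - 1, by omega⟩) := by
        rw [he', heig]
      rw [h1]
      exact F1 ξ _
  -- Step 2: lam 1 ≤ θ 0
  have hθ0 : lam ⟨1, by omega⟩ ≤ θ ⟨0, by omega⟩ := by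
    have hij : e ⟨0, by omega⟩ ≠ e ⟨1, by omega⟩ := by
      intro hc
      have h2 := congrArg Fin.val (e.injective hc)
      simp at h2
    obtain ⟨α, β, hab, hpos⟩ := pick_combo
      (star b ⬝ᵥ ⇑(hA.isHermitian.eigenvectorBasis (e ⟨0, by omega⟩)))
      (star b ⬝ᵥ ⇑(hA.isHermitian.eigenvectorBasis (e ⟨1, by omega⟩)))
    set x : Fin N → ℂ := α • ⇑(hA.isHermitian.eigenvectorBasis (e ⟨0, by omega⟩))
      + β • ⇑(hA.isHermitian.eigenvectorBasis (e ⟨1, by omega⟩)) with hxdef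
    obtain ⟨hxx, hxA⟩ := combo_ray hA.isHermitian hij α β
    have hbx : star b ⬝ᵥ x = 0 := by
      rw [hxdef, dotProduct_add, dotProduct_smul, dotProduct_smul, smul_eq_mul, smul_eq_mul]
      exact hab
    have h1 : (star x ⬝ᵥ ((A - (ξ:ℂ) • vecMulVec b (star b)) *ᵥ x)).re
        = Complex.normSq α * lam ⟨0, by omega⟩ + Complex.normSq β * lam ⟨1, by omega⟩ := by
      rw [hray ξ x, hbx]
      rw [show star x ⬝ᵥ (A *ᵥ x) = _ from hxA, Complex.ofReal_re]
      rw [← he ⟨0, by omega⟩, ← he ⟨1, by omega⟩]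
      simp
    have h2 := ray_ub hΘ x (θ ⟨0, by omega⟩) (fun i => by
      rw [← heig]
      have h3 : (hg ξ).eigenvalues i = θ (e'.symm i) := by
        rw [he' (e'.symm i), ← heig, Equiv.apply_symm_apply]
      rw [h3]
      exact hanti' (by simp only [Fin.le_def]; omega))
    rw [h1] at h2
    rw [show star x ⬝ᵥ x = _ from hxx, Complex.ofReal_re] at h2
    have hle : lam ⟨1, by omega⟩ ≤ lam ⟨0, by omega⟩ :=
      hanti (by simp only [Fin.le_def]; omega)
    nlinarith [Complex.normSq_nonneg α, Complex.normSq_nonneg β]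
  -- Step 3: θ (N-2) ≤ lam (N-2)
  have hθN2 : θ ⟨N - 2, by omega⟩ ≤ lam ⟨N - 2, by omega⟩ := by
    have hij : e ⟨N - 2, by omega⟩ ≠ e ⟨N - 1, by omega⟩ := by
      intro hc
      have h2 := congrArg Fin.val (e.injective hc)
      simp at h2
      omega
    set u : Fin N → ℂ := ⇑(hΘ.eigenvectorBasis (e' ⟨N - 1, by omega⟩)) with hudef
    obtain ⟨α, β, hab, hpos⟩ := pick_combo
      (star u ⬝ᵥ ⇑(hA.isHermitian.eigenvectorBasis (e ⟨N - 2, by omega⟩)))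
      (star u ⬝ᵥ ⇑(hA.isHermitian.eigenvectorBasis (e ⟨N - 1, by omega⟩)))
    set x : Fin N → ℂ := α • ⇑(hA.isHermitian.eigenvectorBasis (e ⟨N - 2, by omega⟩))
      + β • ⇑(hA.isHermitian.eigenvectorBasis (e ⟨N - 1, by omega⟩)) with hxdef
    obtain ⟨hxx, hxA⟩ := combo_ray hA.isHermitian hij α β
    have hux : star u ⬝ᵥ x = 0 := by
      rw [hxdef, dotProduct_add, dotProduct_smul, dotProduct_smul, smul_eq_mul, smul_eq_mul]
      exact hab
    have h2 := ray_lb hΘ x (θ ⟨N - 2, by omega⟩) (fun i => by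
      by_cases hi : i = e' ⟨N - 1, by omega⟩
      · right
        rw [hi]
        exact hux
      · left
        have h3 : hΘ.eigenvalues i = θ (e'.symm i) := by
          rw [he' (e'.symm i), Equiv.apply_symm_apply]
        rw [h3]
        apply hanti'
        have h4 : e'.symm i ≠ ⟨N - 1, by omega⟩ := by
          intro hc
          apply hi
          rw [← hc, Equiv.apply_symm_apply]
        have h5 := (e'.symm i).2
        simp only [Fin.le_def]
        have h6 : (e'.symm i).1 ≠ N - 1 := fun hc => h4 (Fin.ext hc)
        omega)
    rw [show star x ⬝ᵥ x = _ from hxx, Complex.ofReal_re] at h2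
    have h1 : (star x ⬝ᵥ ((A - (ξ:ℂ) • vecMulVec b (star b)) *ᵥ x)).re
        ≤ Complex.normSq α * lam ⟨N - 2, by omega⟩
          + Complex.normSq β * lam ⟨N - 1, by omega⟩ := by
      rw [hray ξ x]
      rw [show star x ⬝ᵥ (A *ᵥ x) = _ from hxA, Complex.ofReal_re]
      rw [← he ⟨N - 2, by omega⟩, ← he ⟨N - 1, by omega⟩]
      have := Complex.normSq_nonneg (star b ⬝ᵥ x)
      nlinarith [hξpos.le]
    have hle : lam ⟨N - 1, by omega⟩ ≤ lam ⟨N - 2, by omega⟩ :=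
      hanti (by simp only [Fin.le_def]; omega)
    nlinarith [Complex.normSq_nonneg α, Complex.normSq_nonneg β]
  constructor
  · have h := hθ0
    rw [hθmin]
    linarith
  · rw [hθmin]
    linarith
end
end

section
/- Let N ≥ 1, let A ∈ ℂ^{N×N} be Hermitian positive definite, let b ∈ ℂ^N be a unit vector, and define the positive real number ξ⊥ = (bᴴ A^{−1} b)^{−1}. Then for every real ξ > ξ⊥, the smallest eigenvalue of the Hermitian matrix A − ξ b bᴴ is strictly negative. -/
open Matrix
open scoped ComplexOrder

noncomputable section

/-- For `ξ > ξ⊥ = (bᴴ A⁻¹ b)⁻¹`, the smallest eigenvalue of the Hermitian matrix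
`A - ξ b bᴴ` is strictly negative. -/
theorem sr1r_smallest_eig_neg {N : ℕ} (hN : 1 ≤ N)
    (A : Matrix (Fin N) (Fin N) ℂ) (hA : A.PosDef)
    (b : Fin N → ℂ) (hb : star b ⬝ᵥ b = 1)
    (ξperp : ℝ) (hξperp : ξperp = ((star b ⬝ᵥ (A⁻¹ *ᵥ b)).re)⁻¹)
    (ξ : ℝ) (hξ : ξperp < ξ)
    (hΘ : (A - (ξ : ℂ) • vecMulVec b (star b)).IsHermitian) :
    (⨅ i, hΘ.eigenvalues i) < 0 := by
  by_contra h
  push_neg at h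
  have hN' : Nonempty (Fin N) := ⟨⟨0, hN⟩⟩
  have heig : ∀ i, 0 ≤ hΘ.eigenvalues i := fun i =>
    le_trans h (ciInf_le (Set.Finite.bddBelow (Set.finite_range _)) i)
  have hpsd : (A - (ξ : ℂ) • vecMulVec b (star b)).PosSemidef :=
    hΘ.posSemidef_iff_eigenvalues_nonneg.mpr heig
  set v : Fin N → ℂ := A⁻¹ *ᵥ b with hv
  set c : ℂ := star b ⬝ᵥ v with hc
  have hbne : b ≠ 0 := by
    intro h0; rw [h0] at hb; simp at hb
  have hcpos : 0 < c := hA.inv.dotProduct_mulVec_pos hbne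
  rw [Complex.lt_def] at hcpos
  have hcre : 0 < c.re := by simpa using hcpos.1
  have hcim : c.im = 0 := by simpa using hcpos.2.symm
  have hcreal : (c.re : ℂ) = c := by
    rw [Complex.ext_iff]; simp [hcim]
  -- A *ᵥ v = b
  have hAv : A *ᵥ v = b := by
    rw [hv, mulVec_mulVec, Matrix.mul_nonsing_inv A hA.det_pos.ne'.isUnit, one_mulVec]
  -- star v ⬝ᵥ b = c
  have hvb : star v ⬝ᵥ b = c := by
    have : star (star b ⬝ᵥ v) = star v ⬝ᵥ b := by
      simp [dotProduct, mul_comm]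
    rw [← this, ← hc, ← hcreal]
    simp
  -- vecMulVec mulVec
  have hvmv : vecMulVec b (star b) *ᵥ v = c • b := by
    funext i
    simp only [vecMulVec, mulVec, dotProduct, of_apply, Pi.smul_apply, smul_eq_mul, hc]
    rw [Finset.sum_mul]
    exact Finset.sum_congr rfl fun j _ => by ring
  have hq := hpsd.dotProduct_mulVec_nonneg v
  rw [sub_mulVec, smul_mulVec, hvmv, dotProduct_sub, hAv, hvb,
    dotProduct_smul, dotProduct_smul, hvb] at hq
  rw [Complex.le_def] at hq
  have hre := hq.1
  simp only [smul_eq_mul, Complex.sub_re, Complex.zero_re, Complex.mul_re, Complex.ofReal_re,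
    Complex.ofReal_im, hcim, mul_zero, zero_mul, sub_zero, zero_sub, neg_zero] at hre
  -- hre : 0 ≤ c.re - ξ * (c.re * c.re)  (roughly)
  have hξ' : 1 < ξ * c.re := by
    rw [hξperp] at hξ
    calc 1 = c.re⁻¹ * c.re := by field_simp
    _ < ξ * c.re := by exact mul_lt_mul_of_pos_right hξ hcre
  nlinarith [hre, hcre]
end
end

section
/- Let N ≥ 1, let A ∈ ℂ^{N×N} be Hermitian positive definite, let b ∈ ℂ^N be a unit vector, and set ξ⊥ = (bᴴ A^{−1} b)^{−1}. Denote by λ_min(M) the smallest eigenvalue of a Hermitian matrix M. Then for all real ξ_2 > ξ_1 > ξ⊥, one has λ_min(A − ξ_2 b bᴴ) < λ_min(A − ξ_1 b bᴴ) < 0; that is, the smallest eigenvalue of A − ξ b bᴴ is strictly decreasing in ξ on (ξ⊥, ∞) and is negative there. -/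
open Matrix
open scoped ComplexOrder

noncomputable section

namespace SR1R

variable {N : ℕ}

/-- Rayleigh lower bound: λ_min * ‖x‖² ≤ Re xᴴ M x. -/
lemma rayleigh_lower [NeZero N] {M : Matrix (Fin N) (Fin N) ℂ} (hM : M.IsHermitian)
    (x : Fin N → ℂ) :
    (⨅ i, hM.eigenvalues i) * (star x ⬝ᵥ x).re ≤ (star x ⬝ᵥ (M *ᵥ x)).re := by
  set U : Matrix (Fin N) (Fin N) ℂ := (hM.eigenvectorUnitary : Matrix (Fin N) (Fin N) ℂ) with hU
  have hUU : U * star U = 1 := (Matrix.mem_unitaryGroup_iff).mp hM.eigenvectorUnitary.2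
  set y : Fin N → ℂ := star U *ᵥ x with hy
  have hx : U *ᵥ y = x := by
    rw [hy, mulVec_mulVec, hUU, one_mulVec]
  have hstary : star x ᵥ* U = star y := by
    rw [hy, star_mulVec, Matrix.star_eq_conjTranspose, conjTranspose_conjTranspose]
  set D : Matrix (Fin N) (Fin N) ℂ := diagonal ((RCLike.ofReal ∘ hM.eigenvalues : Fin N → ℂ)) with hD
  have key : star x ⬝ᵥ (M *ᵥ x) = star y ⬝ᵥ (D *ᵥ y) := by
    conv_lhs => rw [hM.spectral_theorem]
    rw [Unitary.conjStarAlgAut_apply, ← hD, ← hU, Matrix.mul_assoc, ← mulVec_mulVec, ← mulVec_mulVec,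
      dotProduct_mulVec, hstary]
  have key2 : star x ⬝ᵥ x = star y ⬝ᵥ y := by
    nth_rewrite 2 [← hx]
    rw [dotProduct_mulVec, hstary]
  rw [key, key2]
  have hre : (star y ⬝ᵥ (D *ᵥ y)).re = ∑ i, hM.eigenvalues i * Complex.normSq (y i) := by
    simp only [hD, dotProduct, mulVec_diagonal, Function.comp_apply, Pi.star_apply,
      Complex.re_sum]
    congr 1; funext i
    simp [Complex.normSq_apply, Complex.mul_re, Complex.mul_im]
    ring
  have hre2 : (star y ⬝ᵥ y).re = ∑ i, Complex.normSq (y i) := by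
    simp only [dotProduct, Pi.star_apply, Complex.re_sum]
    congr 1; funext i
    simp [Complex.normSq_apply, Complex.mul_re]
  rw [hre, hre2, Finset.mul_sum]
  apply Finset.sum_le_sum
  intro i _
  exact mul_le_mul_of_nonneg_right
    (ciInf_le (Set.Finite.bddBelow (Set.finite_range _)) i) (Complex.normSq_nonneg _)

lemma qform_theta (A : Matrix (Fin N) (Fin N) ℂ) (b : Fin N → ℂ) (ξ : ℝ) (x : Fin N → ℂ) :
    (star x ⬝ᵥ ((A - (ξ : ℂ) • vecMulVec b (star b)) *ᵥ x)).re
      = (star x ⬝ᵥ (A *ᵥ x)).re - ξ * Complex.normSq (star b ⬝ᵥ x) := by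
  have hbb : vecMulVec b (star b) *ᵥ x = (star b ⬝ᵥ x) • b := by
    funext i
    simp [vecMulVec_apply, mulVec, dotProduct, Finset.mul_sum, mul_comm, mul_left_comm]
  rw [sub_mulVec, dotProduct_sub, smul_mulVec, hbb, dotProduct_smul, dotProduct_smul,
    Complex.sub_re]
  congr 1
  have hc : star x ⬝ᵥ b = star (star b ⬝ᵥ x) := by
    rw [star_dotProduct]
  set c := star b ⬝ᵥ x
  rw [smul_eq_mul, smul_eq_mul, hc]
  rw [Complex.star_def, Complex.mul_conj, ← Complex.ofReal_mul, Complex.ofReal_re]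



lemma self_dot_re_nonneg (x : Fin N → ℂ) : 0 ≤ (star x ⬝ᵥ x).re := by
  simp only [dotProduct, Pi.star_apply, Complex.re_sum]
  apply Finset.sum_nonneg
  intro i _
  have h : (star (x i) * x i).re = Complex.normSq (x i) := by
    simp [Complex.normSq_apply, Complex.mul_re]
  rw [h]
  exact Complex.normSq_nonneg _

end SR1R

open SR1R in
/-- On `(ξ⊥, ∞)`, with `ξ⊥ = (bᴴ A⁻¹ b)⁻¹`, the smallest eigenvalue of `A - ξ b bᴴ`
is strictly decreasing in `ξ` and negative: for `ξ₂ > ξ₁ > ξ⊥`,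
`λ_min(A - ξ₂ b bᴴ) < λ_min(A - ξ₁ b bᴴ) < 0`. -/
theorem sr1r_smallest_eig_strict_decreasing {N : ℕ} (hN : 1 ≤ N)
    (A : Matrix (Fin N) (Fin N) ℂ) (hA : A.PosDef)
    (b : Fin N → ℂ) (hb : star b ⬝ᵥ b = 1)
    (ξperp : ℝ) (hξperp : ξperp = ((star b ⬝ᵥ (A⁻¹ *ᵥ b)).re)⁻¹)
    (ξ₁ ξ₂ : ℝ) (h₁ : ξperp < ξ₁) (h₁₂ : ξ₁ < ξ₂)
    (hΘ₁ : (A - (ξ₁ : ℂ) • vecMulVec b (star b)).IsHermitian)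
    (hΘ₂ : (A - (ξ₂ : ℂ) • vecMulVec b (star b)).IsHermitian) :
    (⨅ i, hΘ₂.eigenvalues i) < (⨅ i, hΘ₁.eigenvalues i) ∧
    (⨅ i, hΘ₁.eigenvalues i) < 0 := by
  haveI : NeZero N := ⟨by omega⟩
  haveI : Nonempty (Fin N) := ⟨⟨0, by omega⟩⟩
  have hb0 : b ≠ 0 := by
    intro h; rw [h] at hb; simp at hb
  set x : Fin N → ℂ := A⁻¹ *ᵥ b with hxdef
  have hAx : A *ᵥ x = b := by
    rw [hxdef, mulVec_mulVec, Matrix.mul_nonsing_inv A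
      ((Matrix.isUnit_iff_isUnit_det A).mp hA.isUnit), one_mulVec]
  -- c = bᴴ A⁻¹ b is a positive real
  have hcpos : 0 < star b ⬝ᵥ (A⁻¹ *ᵥ b) := hA.inv.dotProduct_mulVec_pos hb0
  set r : ℝ := (star b ⬝ᵥ (A⁻¹ *ᵥ b)).re with hrdef
  have hr : 0 < r := (Complex.lt_def.mp hcpos).1
  have him : (star b ⬝ᵥ (A⁻¹ *ᵥ b)).im = 0 := ((Complex.lt_def.mp hcpos).2).symm
  have hns : Complex.normSq (star b ⬝ᵥ x) = r ^ 2 := by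
    rw [Complex.normSq_apply, ← hxdef] at *
    rw [him, ← hrdef]; ring
  -- Re xᴴ A x = r
  have hqAx : (star x ⬝ᵥ (A *ᵥ x)).re = r := by
    rw [hAx]
    have hc : star x ⬝ᵥ b = star (star b ⬝ᵥ x) := by rw [star_dotProduct]
    rw [hc, Complex.star_def, Complex.conj_re, hxdef]
  -- λ_min(Θ₁) < 0
  have hξ₁r : 1 < ξ₁ * r := by
    rw [hξperp] at h₁
    calc 1 = r⁻¹ * r := by field_simp
    _ < ξ₁ * r := by exact mul_lt_mul_of_pos_right h₁ hr
  have hq1 : (star x ⬝ᵥ ((A - (ξ₁ : ℂ) • vecMulVec b (star b)) *ᵥ x)).re < 0 := by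
    rw [qform_theta, hqAx, hns]
    nlinarith
  have hmin1 : (⨅ i, hΘ₁.eigenvalues i) < 0 := by
    by_contra h
    push_neg at h
    have h2 := rayleigh_lower hΘ₁ x
    have h3 : 0 ≤ (⨅ i, hΘ₁.eigenvalues i) * (star x ⬝ᵥ x).re :=
      mul_nonneg h (self_dot_re_nonneg x)
    linarith
  refine ⟨?_, hmin1⟩
  -- strict decrease
  obtain ⟨i₀, hi₀⟩ := exists_eq_ciInf_of_finite (f := hΘ₁.eigenvalues)
  set u : Fin N → ℂ := ⇑(hΘ₁.eigenvectorBasis i₀) with hudef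
  have huu : star u ⬝ᵥ u = 1 := by
    rw [hudef, dotProduct_comm, ← EuclideanSpace.inner_eq_star_dotProduct]
    simp [inner_self_eq_norm_sq_to_K, hΘ₁.eigenvectorBasis.orthonormal.1 i₀]
  have hu0 : u ≠ 0 := by
    intro h; rw [h] at huu; simp at huu
  have heig : hΘ₁.eigenvalues i₀
      = (star u ⬝ᵥ ((A - (ξ₁ : ℂ) • vecMulVec b (star b)) *ᵥ u)).re := hΘ₁.eigenvalues_eq i₀
  -- bᴴ u ≠ 0
  have hbu : 0 < Complex.normSq (star b ⬝ᵥ u) := by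
    rcases eq_or_ne (star b ⬝ᵥ u) 0 with h | h
    · exfalso
      have hq := qform_theta A b ξ₁ u
      rw [h, ← heig, hi₀] at hq
      simp only [map_zero, mul_zero, sub_zero] at hq
      have hApos : 0 < (star u ⬝ᵥ (A *ᵥ u)).re := (Complex.lt_def.mp (hA.dotProduct_mulVec_pos hu0)).1
      linarith
    · exact Complex.normSq_pos.mpr h
  have h2 := rayleigh_lower hΘ₂ u
  rw [huu] at h2
  simp only [Complex.one_re, mul_one] at h2
  have hq2 := qform_theta A b ξ₂ u
  have hq1' := qform_theta A b ξ₁ u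
  rw [← heig, hi₀] at hq1'
  calc (⨅ i, hΘ₂.eigenvalues i) ≤ _ := h2
  _ < (⨅ i, hΘ₁.eigenvalues i) := by
      rw [hq2]
      nlinarith
end
end

section
/- Let N ≥ 3, let A ∈ ℂ^{N×N} be Hermitian positive definite with eigenvalues λ_0 ≥ λ_1 ≥ ⋯ ≥ λ_{N−1} > 0 (descending, with multiplicity), let b ∈ ℂ^N be a unit vector, let ξ > 0, and suppose the eigenvalues θ_0 ≥ θ_1 ≥ ⋯ ≥ θ_{N−1} of Θ = A − ξ b bᴴ satisfy −θ_0 < θ_{N−1} < −θ_{N−2}. Then θ_0 > |θ_{N−1}| > θ_{N−2} ≥ λ_{N−1} > 0, the largest singular value of Θ equals θ_0, the smallest singular value of Θ equals θ_{N−2}, and the condition number satisfies κ(Θ) = θ_0/θ_{N−2} ≤ λ_0/λ_{N−1} = κ(A). -/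
open Matrix
open scoped ComplexOrder

noncomputable section

set_option maxHeartbeats 1600000

section Helpers

variable {N : ℕ}

lemma dot_star_self' (c : Fin N → ℂ) :
    star c ⬝ᵥ c = ((∑ i, ‖c i‖ ^ 2 : ℝ) : ℂ) := by
  push_cast
  simp [dotProduct, Pi.star_apply, ← Complex.normSq_eq_norm_sq, Complex.mul_conj',
    Complex.normSq_eq_norm_sq, Complex.sq_norm, mul_comm]

lemma unitary_preserve' (U : Matrix (Fin N) (Fin N) ℂ) (hU : U ∈ Matrix.unitaryGroup (Fin N) ℂ)
    (c d : Fin N → ℂ) :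
    star (U *ᵥ c) ⬝ᵥ (U *ᵥ d) = star c ⬝ᵥ d := by
  rw [star_mulVec, dotProduct_mulVec, vecMul_vecMul,
    (show Uᴴ * U = 1 from hU.1), Matrix.vecMul_one]

lemma quad_eq' {M : Matrix (Fin N) (Fin N) ℂ} (hM : M.IsHermitian) (c : Fin N → ℂ) :
    star ((hM.eigenvectorUnitary : Matrix (Fin N) (Fin N) ℂ) *ᵥ c) ⬝ᵥ
      (M *ᵥ ((hM.eigenvectorUnitary : Matrix (Fin N) (Fin N) ℂ) *ᵥ c)) =
    ((∑ i, hM.eigenvalues i * ‖c i‖ ^ 2 : ℝ) : ℂ) := by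
  set U : Matrix (Fin N) (Fin N) ℂ := (hM.eigenvectorUnitary : Matrix (Fin N) (Fin N) ℂ) with hUdef
  have hU : U ∈ Matrix.unitaryGroup (Fin N) ℂ := hM.eigenvectorUnitary.2
  have hMU : M *ᵥ (U *ᵥ c) = U *ᵥ ((diagonal (RCLike.ofReal ∘ hM.eigenvalues)) *ᵥ c) := by
    rw [mulVec_mulVec, mulVec_mulVec]
    congr 1
    conv_lhs => rw [hM.spectral_theorem, Unitary.conjStarAlgAut_apply]
    rw [Matrix.mul_assoc, Matrix.mul_assoc, (show (star U) * U = 1 from hU.1), Matrix.mul_one]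
  rw [hMU, unitary_preserve' U hU]
  push_cast
  simp [dotProduct, mulVec_diagonal, Finset.mul_sum]
  congr 1
  ext i
  rw [mul_comm ((starRingEnd ℂ) (c i)), mul_assoc, Complex.mul_conj, Complex.normSq_eq_norm_sq]
  norm_cast

lemma theta_split' (A Θ : Matrix (Fin N) (Fin N) ℂ) (b : Fin N → ℂ) (ξ : ℝ)
    (hΘdef : Θ = A - (ξ : ℂ) • vecMulVec b (star b)) (x : Fin N → ℂ) :
    star x ⬝ᵥ (Θ *ᵥ x) = star x ⬝ᵥ (A *ᵥ x) - ((ξ * ‖star b ⬝ᵥ x‖ ^ 2 : ℝ) : ℂ) := by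
  have hQ : vecMulVec b (star b) *ᵥ x = (star b ⬝ᵥ x) • b := by
    ext i
    simp only [mulVec, vecMulVec_apply, dotProduct, Pi.smul_apply, smul_eq_mul, Finset.sum_mul]
    exact Finset.sum_congr rfl (fun j _ => by ring)
  rw [hΘdef, sub_mulVec, dotProduct_sub, smul_mulVec, hQ]
  congr 1
  have h2 : (star b ⬝ᵥ x) * star (star b ⬝ᵥ x) = ((‖star b ⬝ᵥ x‖ ^ 2 : ℝ) : ℂ) := by
    rw [RCLike.star_def, Complex.mul_conj]
    norm_cast
    simp [Complex.normSq_eq_norm_sq]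
  rw [dotProduct_smul, dotProduct_smul, smul_eq_mul, smul_eq_mul,
    (show star x ⬝ᵥ b = star (star b ⬝ᵥ x) by rw [star_dotProduct]), h2]
  push_cast
  ring

lemma pair_sum' (j k : Fin N) (hjk : j ≠ k) (α β : ℂ) (g : Fin N → ℝ) :
    ∑ i, g i * ‖((Pi.single j α + Pi.single k β : Fin N → ℂ)) i‖ ^ 2
      = g j * ‖α‖ ^ 2 + g k * ‖β‖ ^ 2 := by
  classical
  have h0 : ∀ i ∈ (Finset.univ : Finset (Fin N)), i ∉ ({j, k} : Finset (Fin N)) →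
      g i * ‖((Pi.single j α + Pi.single k β : Fin N → ℂ)) i‖ ^ 2 = 0 := by
    intro i _ hi
    simp only [Finset.mem_insert, Finset.mem_singleton, not_or] at hi
    simp [Pi.single_eq_of_ne hi.1, Pi.single_eq_of_ne hi.2]
  rw [← Finset.sum_subset (Finset.subset_univ ({j, k} : Finset (Fin N))) h0,
    Finset.sum_pair hjk]
  simp [Pi.single_eq_of_ne hjk, Pi.single_eq_of_ne hjk.symm]

lemma single_sum' (j : Fin N) (g : Fin N → ℝ) :
    ∑ i, g i * ‖((Pi.single j (1 : ℂ) : Fin N → ℂ)) i‖ ^ 2 = g j := by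
  rw [Finset.sum_eq_single j]
  · simp
  · intro i _ hi
    simp [Pi.single_eq_of_ne hi]
  · simp

lemma rayleigh_exists' {M : Matrix (Fin N) (Fin N) ℂ} (hM : M.IsHermitian) (x : Fin N → ℂ)
    (s : ℝ) (hs : star x ⬝ᵥ x = (s : ℂ)) (lo hi : ℝ)
    (hlo : ∀ i, lo ≤ hM.eigenvalues i) (hhi : ∀ i, hM.eigenvalues i ≤ hi) :
    ∃ t : ℝ, star x ⬝ᵥ (M *ᵥ x) = (t : ℂ) ∧ lo * s ≤ t ∧ t ≤ hi * s := by
  set U : Matrix (Fin N) (Fin N) ℂ := (hM.eigenvectorUnitary : Matrix (Fin N) (Fin N) ℂ) with hUdef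
  have hU : U ∈ Matrix.unitaryGroup (Fin N) ℂ := hM.eigenvectorUnitary.2
  set c : Fin N → ℂ := star U *ᵥ x with hcdef
  have hx : x = U *ᵥ c := by
    rw [hcdef, mulVec_mulVec, (show U * star U = 1 from hU.2), one_mulVec]
  have hq := quad_eq' hM c
  rw [← hx] at hq
  have hsc : star x ⬝ᵥ x = ((∑ i, ‖c i‖ ^ 2 : ℝ) : ℂ) := by
    conv_lhs => rw [hx]
    rw [unitary_preserve' U hU c c, dot_star_self']
  have hs' : s = ∑ i, ‖c i‖ ^ 2 := by
    exact_mod_cast hs.symm.trans hsc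
  refine ⟨∑ i, hM.eigenvalues i * ‖c i‖ ^ 2, hq, ?_, ?_⟩
  · rw [hs', Finset.mul_sum]
    exact Finset.sum_le_sum fun i _ => mul_le_mul_of_nonneg_right (hlo i) (by positivity)
  · rw [hs', Finset.mul_sum]
    exact Finset.sum_le_sum fun i _ => mul_le_mul_of_nonneg_right (hhi i) (by positivity)

end Helpers

/-- If `ξ > 0` and the descending eigenvalues of `Θ = A - ξ b bᴴ` satisfy
`-θ₀ < θ_{N-1} < -θ_{N-2}`, then `θ₀ > |θ_{N-1}| > θ_{N-2} ≥ λ_{N-1} > 0`, the largest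
singular value of `Θ` is `θ₀`, the smallest singular value of `Θ` is `θ_{N-2}`, and
`κ(Θ) = θ₀/θ_{N-2} ≤ λ₀/λ_{N-1} = κ(A)`. -/
theorem sr1r_cond_improvement {N : ℕ} (hN : 3 ≤ N)
    (A : Matrix (Fin N) (Fin N) ℂ) (hA : A.PosDef)
    (lam : Fin N → ℝ) (hlam : IsDescEigListing hA.isHermitian lam)
    (hlampos : ∀ i, 0 < lam i)
    (b : Fin N → ℂ) (hb : star b ⬝ᵥ b = 1)
    (ξ : ℝ) (hξ : 0 < ξ)
    (Θ : Matrix (Fin N) (Fin N) ℂ)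
    (hΘdef : Θ = A - (ξ : ℂ) • vecMulVec b (star b))
    (hΘ : Θ.IsHermitian)
    (θ : Fin N → ℝ) (hθ : IsDescEigListing hΘ θ)
    (hwin : -θ ⟨0, by omega⟩ < θ ⟨N - 1, by omega⟩ ∧
            θ ⟨N - 1, by omega⟩ < -θ ⟨N - 2, by omega⟩) :
    θ ⟨0, by omega⟩ > |θ ⟨N - 1, by omega⟩| ∧
    |θ ⟨N - 1, by omega⟩| > θ ⟨N - 2, by omega⟩ ∧
    θ ⟨N - 2, by omega⟩ ≥ lam ⟨N - 1, by omega⟩ ∧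
    lam ⟨N - 1, by omega⟩ > 0 ∧
    (⨆ i, |hΘ.eigenvalues i|) = θ ⟨0, by omega⟩ ∧
    (⨅ i, |hΘ.eigenvalues i|) = θ ⟨N - 2, by omega⟩ ∧
    θ ⟨0, by omega⟩ / θ ⟨N - 2, by omega⟩ ≤ lam ⟨0, by omega⟩ / lam ⟨N - 1, by omega⟩ := by
  obtain ⟨hwin1, hwin2⟩ := hwin
  haveI : Nonempty (Fin N) := ⟨⟨0, by omega⟩⟩
  obtain ⟨hθa, e, he⟩ := hθ
  obtain ⟨hlama, f, hf⟩ := hlam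
  have h0 : (0 : ℕ) < N := by omega
  set i0 : Fin N := ⟨0, by omega⟩ with hi0
  set i1 : Fin N := ⟨N - 1, by omega⟩ with hi1
  set i2 : Fin N := ⟨N - 2, by omega⟩ with hi2
  -- basic antitone consequences
  have hθmin : ∀ j : Fin N, θ i1 ≤ θ j := fun j =>
    hθa (by rw [Fin.le_def]; have := j.isLt; simp [hi1]; omega)
  have hθmax : ∀ j : Fin N, θ j ≤ θ i0 := fun j =>
    hθa (by rw [Fin.le_def]; simp [hi0])
  have h02 : θ i2 ≤ θ i0 := hθmax i2
  have h12 : θ i1 ≤ θ i2 := hθmin i2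
  have hlmin : ∀ i, lam i1 ≤ hA.isHermitian.eigenvalues i := fun i => by
    rw [(show hA.isHermitian.eigenvalues i = lam (f.symm i) by rw [hf, Equiv.apply_symm_apply])]
    exact hlama (by rw [Fin.le_def]; have := (f.symm i).isLt; simp [hi1]; omega)
  have hlmax : ∀ i, hA.isHermitian.eigenvalues i ≤ lam i0 := fun i => by
    rw [(show hA.isHermitian.eigenvalues i = lam (f.symm i) by rw [hf, Equiv.apply_symm_apply])]
    exact hlama (by rw [Fin.le_def]; simp [hi0])
  set UΘ : Matrix (Fin N) (Fin N) ℂ := (hΘ.eigenvectorUnitary : Matrix (Fin N) (Fin N) ℂ)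
    with hUΘdef
  have hUΘ : UΘ ∈ Matrix.unitaryGroup (Fin N) ℂ := hΘ.eigenvectorUnitary.2
  -- interlacing : lam i1 ≤ θ i2
  have hkey : lam i1 ≤ θ i2 := by
    set w : Fin N → ℂ := star b ᵥ* UΘ with hwdef
    set j : Fin N := e i1 with hj
    set k : Fin N := e i2 with hk
    have hjk : j ≠ k := by
      intro h
      have := e.injective h
      rw [hi1, hi2, Fin.mk.injEq] at this
      omega
    obtain ⟨α, β, hlin, hpos⟩ :
        ∃ α β : ℂ, w j * α + w k * β = 0 ∧ 0 < ‖α‖ ^ 2 + ‖β‖ ^ 2 := by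
      by_cases hw : w j = 0 ∧ w k = 0
      · exact ⟨1, 0, by simp [hw.1], by norm_num⟩
      · refine ⟨w k, -(w j), by ring, ?_⟩
        rcases not_and_or.mp hw with h | h
        · exact add_pos_of_nonneg_of_pos (by positivity)
            (pow_pos (norm_pos_iff.mpr (neg_ne_zero.mpr h)) 2)
        · exact add_pos_of_pos_of_nonneg (pow_pos (norm_pos_iff.mpr h) 2) (by positivity)
    set c : Fin N → ℂ := Pi.single j α + Pi.single k β with hcdef
    set x : Fin N → ℂ := UΘ *ᵥ c with hxdef
    have horth : star b ⬝ᵥ x = 0 := by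
      rw [hxdef, dotProduct_mulVec, ← hwdef, hcdef, dotProduct_add, dotProduct_single,
        dotProduct_single]
      exact hlin
    have hsx : star x ⬝ᵥ x = ((‖α‖ ^ 2 + ‖β‖ ^ 2 : ℝ) : ℂ) := by
      rw [hxdef, unitary_preserve' UΘ hUΘ c c, dot_star_self']
      norm_cast
      simpa [hcdef] using pair_sum' j k hjk α β (fun _ => (1 : ℝ))
    have hqΘ : star x ⬝ᵥ (Θ *ᵥ x) =
        ((θ i1 * ‖α‖ ^ 2 + θ i2 * ‖β‖ ^ 2 : ℝ) : ℂ) := by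
      rw [hxdef, hUΘdef, quad_eq' hΘ c]
      norm_cast
      rw [hcdef, pair_sum' j k hjk α β]
      rw [(show hΘ.eigenvalues j = θ i1 from (he i1).symm),
        (show hΘ.eigenvalues k = θ i2 from (he i2).symm)]
    obtain ⟨t, ht, htlo, _⟩ := rayleigh_exists' hA.isHermitian x _ hsx (lam i1) (lam i0)
      hlmin hlmax
    have hsplit := theta_split' A Θ b ξ hΘdef x
    rw [hqΘ, ht, horth] at hsplit
    have ht' : θ i1 * ‖α‖ ^ 2 + θ i2 * ‖β‖ ^ 2 = t := by
      have : ((θ i1 * ‖α‖ ^ 2 + θ i2 * ‖β‖ ^ 2 : ℝ) : ℂ) = ((t : ℝ) : ℂ) := by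
        rw [hsplit]; simp
      exact_mod_cast this
    have hle : lam i1 * (‖α‖ ^ 2 + ‖β‖ ^ 2) ≤ θ i2 * (‖α‖ ^ 2 + ‖β‖ ^ 2) := by
      calc lam i1 * (‖α‖ ^ 2 + ‖β‖ ^ 2) ≤ t := htlo
        _ = θ i1 * ‖α‖ ^ 2 + θ i2 * ‖β‖ ^ 2 := ht'.symm
        _ ≤ θ i2 * ‖α‖ ^ 2 + θ i2 * ‖β‖ ^ 2 := by
            have := mul_le_mul_of_nonneg_right h12 (by positivity : (0:ℝ) ≤ ‖α‖ ^ 2)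
            linarith
        _ = θ i2 * (‖α‖ ^ 2 + ‖β‖ ^ 2) := by ring
    exact le_of_mul_le_mul_right hle hpos
  -- top bound : θ i0 ≤ lam i0
  have htop : θ i0 ≤ lam i0 := by
    set c : Fin N → ℂ := Pi.single (e i0) 1 with hcdef
    set x : Fin N → ℂ := UΘ *ᵥ c with hxdef
    have hsx : star x ⬝ᵥ x = ((1 : ℝ) : ℂ) := by
      rw [hxdef, unitary_preserve' UΘ hUΘ c c, dot_star_self']
      norm_cast
      simpa using single_sum' (e i0) (fun _ => (1 : ℝ))
    have hqΘ : star x ⬝ᵥ (Θ *ᵥ x) = ((θ i0 : ℝ) : ℂ) := by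
      rw [hxdef, hUΘdef, quad_eq' hΘ c]
      norm_cast
      rw [hcdef, single_sum' (e i0)]
      exact (he i0).symm
    obtain ⟨t, ht, _, hthi⟩ := rayleigh_exists' hA.isHermitian x _ hsx (lam i1) (lam i0)
      hlmin hlmax
    have hsplit := theta_split' A Θ b ξ hΘdef x
    rw [hqΘ, ht] at hsplit
    have h1 : θ i0 = t - ξ * ‖star b ⬝ᵥ x‖ ^ 2 := by exact_mod_cast hsplit
    nlinarith [sq_nonneg ‖star b ⬝ᵥ x‖, mul_le_mul_of_nonneg_left
      (sq_nonneg ‖star b ⬝ᵥ x‖) hξ.le]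
  -- assemble
  have hlpos : 0 < lam i1 := hlampos i1
  have hθ2pos : 0 < θ i2 := lt_of_lt_of_le hlpos hkey
  have hθ1neg : θ i1 < 0 := by linarith
  have habs1 : |θ i1| = -θ i1 := abs_of_neg hθ1neg
  have hθ0pos : 0 < θ i0 := lt_of_lt_of_le hθ2pos h02
  have heig : ∀ i, hΘ.eigenvalues i = θ (e.symm i) := fun i => by
    rw [he, Equiv.apply_symm_apply]
  have hG5 : (⨆ i, |hΘ.eigenvalues i|) = θ i0 := by
    apply le_antisymm
    · refine ciSup_le fun i => ?_
      rw [heig i]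
      exact abs_le.mpr ⟨by linarith [hθmin (e.symm i)], hθmax _⟩
    · have hval : |hΘ.eigenvalues (e i0)| = θ i0 := by
        rw [← he i0]; exact abs_of_pos hθ0pos
      rw [← hval]
      exact le_ciSup (f := fun i => |hΘ.eigenvalues i|)
        (Set.Finite.bddAbove (Set.finite_range _)) (e i0)
  have hG6 : (⨅ i, |hΘ.eigenvalues i|) = θ i2 := by
    apply le_antisymm
    · have hval : |hΘ.eigenvalues (e i2)| = θ i2 := by
        rw [← he i2]; exact abs_of_pos hθ2pos
      rw [← hval]
      exact ciInf_le (f := fun i => |hΘ.eigenvalues i|)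
        (Set.Finite.bddBelow (Set.finite_range _)) (e i2)
    · refine le_ciInf fun i => ?_
      rw [heig i]
      set j : Fin N := e.symm i with hjdef
      by_cases hc : (j : ℕ) ≤ N - 2
      · have hle : θ i2 ≤ θ j := hθa (by rw [Fin.le_def]; simpa [hi2] using hc)
        rw [abs_of_pos (lt_of_lt_of_le hθ2pos hle)]
        exact hle
      · have : j = i1 := by
          apply Fin.ext
          rw [hi1]
          show (j : ℕ) = N - 1
          have := j.isLt
          omega
        rw [this, habs1]
        linarith
  refine ⟨by rw [habs1]; linarith, by rw [habs1]; linarith, hkey, hlpos, hG5, hG6, ?_⟩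
  exact div_le_div₀ (hlampos i0).le htop hlpos hkey
end
end

section
/- Let λ_0, λ, β be real numbers with 0 < λ < λ_0 and 0 < β ≤ 1. Then the quadratic equation x² − λ x − β² λ_0 (λ_0 − λ) = 0 has two real roots x_1 = (λ + √(λ² + 4β²λ_0(λ_0 − λ)))/2 and x_2 = (λ − √(λ² + 4β²λ_0(λ_0 − λ)))/2, which satisfy x_1 > 0 > x_2, |x_2| < x_1, |x_1 − β λ_0| ≤ λ, and |x_2 + β λ_0| ≤ (3/2) λ. -/
noncomputable section

/-- For `0 < l < l0` and `0 < β ≤ 1`, the quadratic `x² - l x - β² l0 (l0 - l) = 0` has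
the two real roots `x₁ = (l + √(l² + 4β²l0(l0-l)))/2 > 0 > x₂ = (l - √(l² + 4β²l0(l0-l)))/2`,
with `|x₂| < x₁`, `|x₁ - β l0| ≤ l` and `|x₂ + β l0| ≤ (3/2) l`. -/
theorem sr1r_quadratic_roots (l0 l β : ℝ)
    (hl : 0 < l) (hll0 : l < l0) (hβ0 : 0 < β) (hβ1 : β ≤ 1)
    (x₁ x₂ : ℝ)
    (hx₁ : x₁ = (l + Real.sqrt (l ^ 2 + 4 * β ^ 2 * l0 * (l0 - l))) / 2)
    (hx₂ : x₂ = (l - Real.sqrt (l ^ 2 + 4 * β ^ 2 * l0 * (l0 - l))) / 2) :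
    x₁ ^ 2 - l * x₁ - β ^ 2 * l0 * (l0 - l) = 0 ∧
    x₂ ^ 2 - l * x₂ - β ^ 2 * l0 * (l0 - l) = 0 ∧
    x₂ < 0 ∧ 0 < x₁ ∧ |x₂| < x₁ ∧
    |x₁ - β * l0| ≤ l ∧ |x₂ + β * l0| ≤ (3 / 2) * l := by
  have hl0 : 0 < l0 := hl.trans hll0
  have hP : 0 < β ^ 2 * l0 * (l0 - l) :=
    mul_pos (mul_pos (pow_pos hβ0 2) hl0) (sub_pos.mpr hll0)
  have hDnn : (0:ℝ) ≤ l ^ 2 + 4 * β ^ 2 * l0 * (l0 - l) := by nlinarith [sq_nonneg l]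
  obtain ⟨s, hs⟩ : ∃ s, s = Real.sqrt (l ^ 2 + 4 * β ^ 2 * l0 * (l0 - l)) := ⟨_, rfl⟩
  rw [← hs] at hx₁ hx₂
  have hs0 : 0 ≤ s := hs ▸ Real.sqrt_nonneg _
  have hs2 : s ^ 2 = l ^ 2 + 4 * β ^ 2 * l0 * (l0 - l) := hs ▸ Real.sq_sqrt hDnn
  have key : ∀ t : ℝ, t ^ 2 ≤ l ^ 2 + 4 * β ^ 2 * l0 * (l0 - l) → t ≤ s := by
    intro t ht
    rw [hs]
    calc t ≤ |t| := le_abs_self t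
      _ = Real.sqrt (t ^ 2) := (Real.sqrt_sq_eq_abs t).symm
      _ ≤ _ := Real.sqrt_le_sqrt ht
  have key2 : ∀ t : ℝ, 0 ≤ t → l ^ 2 + 4 * β ^ 2 * l0 * (l0 - l) ≤ t ^ 2 → s ≤ t := by
    intro t ht h
    rw [hs]
    calc Real.sqrt _ ≤ Real.sqrt (t ^ 2) := Real.sqrt_le_sqrt h
      _ = t := Real.sqrt_sq ht
  have h1 : 0 ≤ β * (1 - β) * l0 * l :=
    mul_nonneg (mul_nonneg (mul_nonneg hβ0.le (by linarith)) hl0.le) hl.le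
  have h3 : 0 < β * l0 * l := mul_pos (mul_pos hβ0 hl0) hl
  have h4 : 0 < β ^ 2 * l0 * l := mul_pos (mul_pos (pow_pos hβ0 2) hl0) hl
  have hsl : l < s := by
    have hle : l ≤ s := key l (by nlinarith)
    rcases hle.lt_or_eq with h | h
    · exact h
    · exfalso; rw [← h] at hs2; nlinarith
  have hsub : s ≤ 2 * β * l0 + l := key2 _ (by positivity) (by nlinarith)
  have hlow1 : 2 * β * l0 - 3 * l ≤ s := by
    rcases le_or_gt (2 * β * l0) (3 * l) with h | h
    · linarith
    · exact key _ (by nlinarith)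
  have hlow2 : 2 * β * l0 - 2 * l ≤ s := by
    rcases le_or_gt (2 * β * l0) (2 * l) with h | h
    · linarith
    · exact key _ (by nlinarith)
  refine ⟨by rw [hx₁]; nlinarith, by rw [hx₂]; nlinarith, by rw [hx₂]; linarith,
    by rw [hx₁]; linarith, ?_, ?_, ?_⟩
  · rw [hx₁, hx₂, abs_of_nonpos (by linarith)]
    linarith
  · rw [hx₁, abs_le]; constructor <;> linarith
  · rw [hx₂, abs_le]; constructor <;> linarith
end
end
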